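/- Let A₁,…,A_k be n×n real 0-1 matrices (n ≥ 2) summing to J, with Σᵢ xᵢAᵢ normal for all real xᵢ. Suppose A₁ = [[0,1],[1,0]] ⊕ O_{n-2}. Then for every j ≠ 1, writing Aⱼ in 2×2 block form [[B₁, B₂],[B₃, B₄]] with B₁ of size 2×2, one has B₃ = B₂ᵀ. -/

import Mathlib

open Matrix

theorem stmt15 (n k : ℕ) (hn : 2 ≤ n) [NeZero k] (A : Fin k → Matrix (Fin n) (Fin n) ℝ)
    (h01 : ∀ i a b, A i a b = 0 ∨ A i a b = 1)
    (hsum : ∑ i, A i = fun _ _ => (1 : ℝ))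
    (h : ∀ x : Fin k → ℝ,
        (∑ i, x i • A i) * (∑ i, x i • A i)ᵀ = (∑ i, x i • A i)ᵀ * (∑ i, x i • A i))
    (hA1 : ∀ a b : Fin n,
        A 0 a b = if (a.val = 0 ∧ b.val = 1) ∨ (a.val = 1 ∧ b.val = 0) then 1 else 0) :
    ∀ j : Fin k, j ≠ 0 → ∀ a b : Fin n, 2 ≤ a.val → b.val < 2 → A j a b = A j b a := by
  intro j hj a b ha hb
  set M := A 0 with hM
  set N := A j with hN
  have single : ∀ i : Fin k, (A i) * (A i)ᵀ = (A i)ᵀ * (A i) := by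
    intro i
    have := h (fun t => if t = i then 1 else 0)
    simpa [ite_smul, Finset.sum_ite_eq'] using this
  have H0 : M * Mᵀ = Mᵀ * M := single 0
  have Hj : N * Nᵀ = Nᵀ * N := single j
  have Hs : (M + N) * (M + N)ᵀ = (M + N)ᵀ * (M + N) := by
    have hpt : ∀ i : Fin k, (if i = 0 ∨ i = j then (1:ℝ) else 0) • A i
        = (if i = 0 then (1:ℝ) else 0) • A i + (if i = j then (1:ℝ) else 0) • A i := by
      intro i
      rcases eq_or_ne i 0 with h0 | h0 <;> rcases eq_or_ne i j with h1 | h1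
      · exact absurd (h0 ▸ h1).symm hj
      · simp [h0, h1, Ne.symm hj]
      · simp [h0, h1, hj]
      · simp [h0, h1]
    have hsum2 : (∑ i, (if i = 0 ∨ i = j then (1:ℝ) else 0) • A i) = M + N := by
      rw [Finset.sum_congr rfl (fun i _ => hpt i), Finset.sum_add_distrib]
      simp [ite_smul, Finset.sum_ite_eq']; rfl
    have := h (fun t => if t = 0 ∨ t = j then 1 else 0)
    rwa [hsum2] at this
  have key : M * Nᵀ + N * Mᵀ = Mᵀ * N + Nᵀ * M := by
    have Hs' : Mᵀ * M + (M * Nᵀ + N * Mᵀ) + N * Nᵀ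
        = Mᵀ * M + (Mᵀ * N + Nᵀ * M) + N * Nᵀ := by
      calc Mᵀ * M + (M * Nᵀ + N * Mᵀ) + N * Nᵀ
          = (M + N) * (M + N)ᵀ := by rw [transpose_add, ← H0]; noncomm_ring
        _ = (M + N)ᵀ * (M + N) := Hs
        _ = Mᵀ * M + (Mᵀ * N + Nᵀ * M) + N * Nᵀ := by
            rw [transpose_add, Hj]; noncomm_ring
    exact add_left_cancel (add_right_cancel Hs')
  have ha0 : a.val ≠ 0 := by omega
  have ha1 : a.val ≠ 1 := by omega
  have he0 : (0 : ℕ) < n := by omega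
  have he1 : (1 : ℕ) < n := by omega
  set e0 : Fin n := ⟨0, he0⟩ with he0d
  set e1 : Fin n := ⟨1, he1⟩ with he1d
  have entry : ∀ c : Fin n, (M * Nᵀ + N * Mᵀ) a c = (Mᵀ * N + Nᵀ * M) a c := by
    intro c; rw [key]
  have hMa : ∀ x : Fin n, M a x = 0 := by
    intro x; rw [hA1]; simp [ha0, ha1]
  have hMa' : ∀ x : Fin n, M x a = 0 := by
    intro x; rw [hA1]; simp [ha0, ha1]
  have hMe0 : ∀ x : Fin n, M e0 x = if x = e1 then 1 else 0 := by
    intro x; rw [hA1]; simp [he0d, he1d, Fin.ext_iff]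
  have hMe1 : ∀ x : Fin n, M e1 x = if x = e0 then 1 else 0 := by
    intro x; rw [hA1]; simp [he0d, he1d, Fin.ext_iff]
  have hMe0' : ∀ x : Fin n, M x e0 = if x = e1 then 1 else 0 := by
    intro x; rw [hA1]; simp [he0d, he1d, Fin.ext_iff]
  have hMe1' : ∀ x : Fin n, M x e1 = if x = e0 then 1 else 0 := by
    intro x; rw [hA1]; simp [he0d, he1d, Fin.ext_iff]
  have k0 := entry e0
  have k1 := entry e1
  simp only [Matrix.add_apply, Matrix.mul_apply, Matrix.transpose_apply] at k0 k1
  simp only [hMa, hMa', hMe0, hMe1, hMe0', hMe1', zero_mul, mul_zero,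
    Finset.sum_const_zero, zero_add, add_zero, mul_ite, ite_mul, mul_one, one_mul,
    Finset.sum_ite_eq', Finset.mem_univ, if_true] at k0 k1
  have hb' : b = e0 ∨ b = e1 := by
    have : b.val = 0 ∨ b.val = 1 := by omega
    rcases this with h' | h'
    · left; exact Fin.ext (by simp [he0d, h'])
    · right; exact Fin.ext (by simp [he1d, h'])
  rcases hb' with rfl | rfl
  · exact k1
  · exact k0
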